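/- If G is a graph with VC dimension at most d and minimum degree at least δ|V(G)|, then the domination number of G is at most (8d/δ)·log₂(8d/δ). -/

import Mathlib

open Finset

section Counting
variable {V : Type*} [Fintype V] [DecidableEq V] {m : ℕ}

lemma filter_eq_piFinset (S : Fin m → Finset V) :
    (univ : Finset (Fin m → V)).filter (fun y => ∀ j, y j ∈ S j) = Fintype.piFinset S := by
  ext y; simp [Fintype.mem_piFinset]

lemma count_one (j₀ : Fin m) (R : Finset V) :
    ((univ : Finset (Fin m → V)).filter (fun y => y j₀ ∈ R)).card
      = R.card * (Fintype.card V) ^ (m - 1) := by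
  have h : (univ : Finset (Fin m → V)).filter (fun y => y j₀ ∈ R)
      = Fintype.piFinset (fun j => if j = j₀ then R else univ) := by
    rw [← filter_eq_piFinset]
    apply filter_congr
    intro y _
    constructor
    · intro hy j
      by_cases hj : j = j₀ <;> simp [hj, hy]
    · intro hy
      have := hy j₀
      simpa using this
  rw [h, Fintype.card_piFinset]
  rw [← Finset.mul_prod_erase univ _ (mem_univ j₀)]
  simp only [if_pos rfl]
  congr 1
  rw [Finset.prod_congr rfl (fun j hj => by
    rw [if_neg (Finset.ne_of_mem_erase hj)]), Finset.prod_const]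
  simp [Finset.card_erase_of_mem]

lemma count_two (j₀ j₁ : Fin m) (h : j₀ ≠ j₁) (R : Finset V) :
    ((univ : Finset (Fin m → V)).filter (fun y => y j₀ ∈ R ∧ y j₁ ∈ R)).card
      = R.card ^ 2 * (Fintype.card V) ^ (m - 2) := by
  have heq : (univ : Finset (Fin m → V)).filter (fun y => y j₀ ∈ R ∧ y j₁ ∈ R)
      = Fintype.piFinset (fun j => if j = j₀ then R else if j = j₁ then R else univ) := by
    rw [← filter_eq_piFinset]
    apply filter_congr
    intro y _
    constructor
    · rintro ⟨h0, h1⟩ j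
      by_cases hj : j = j₀
      · simp [hj, h0]
      · by_cases hj' : j = j₁ <;> simp [hj, hj', h1]
    · intro hy
      refine ⟨?_, ?_⟩
      · have := hy j₀; simpa using this
      · have := hy j₁; simpa [h.symm] using this
  rw [heq, Fintype.card_piFinset]
  rw [← Finset.mul_prod_erase univ _ (mem_univ j₀)]
  have hj₁ : j₁ ∈ (univ : Finset (Fin m)).erase j₀ := by simp [h.symm]
  rw [← Finset.mul_prod_erase _ _ hj₁]
  simp only [if_pos rfl, if_neg h.symm]
  rw [Finset.prod_congr rfl (fun j hj => by
    have hj0 : j ≠ j₀ := Finset.ne_of_mem_erase (Finset.mem_of_mem_erase hj)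
    have hj1 : j ≠ j₁ := Finset.ne_of_mem_erase hj
    rw [if_neg hj0, if_neg hj1]), Finset.prod_const]
  have : (((univ : Finset (Fin m)).erase j₀).erase j₁).card = m - 2 := by
    rw [Finset.card_erase_of_mem hj₁, Finset.card_erase_of_mem (mem_univ j₀)]
    simp only [Finset.card_univ, Fintype.card_fin]
    omega
  rw [this]
  simp [sq]
  ring

end Counting

section Moments
variable {V : Type*} [Fintype V] [DecidableEq V] {m : ℕ}

private lemma ite_mul_ite' (P Q : Prop) [Decidable P] [Decidable Q] :
    (if P then (1:ℕ) else 0) * (if Q then 1 else 0) = if P ∧ Q then 1 else 0 := by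
  by_cases hP : P <;> by_cases hQ : Q <;> simp [hP, hQ]

lemma sum_X (R : Finset V) :
    ∑ y : Fin m → V, ((univ.filter (fun j => y j ∈ R)).card)
      = m * (R.card * (Fintype.card V) ^ (m - 1)) := by
  calc ∑ y : Fin m → V, ((univ.filter (fun j => y j ∈ R)).card)
      = ∑ y : Fin m → V, ∑ j : Fin m, (if y j ∈ R then 1 else 0) := by
        refine Finset.sum_congr rfl fun y _ => ?_
        rw [Finset.card_filter]
    _ = ∑ j : Fin m, ∑ y : Fin m → V, (if y j ∈ R then 1 else 0) := Finset.sum_comm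
    _ = ∑ j : Fin m, ((univ.filter (fun y : Fin m → V => y j ∈ R)).card) := by
        refine Finset.sum_congr rfl fun j _ => ?_
        rw [Finset.card_filter]
    _ = ∑ _j : Fin m, R.card * (Fintype.card V) ^ (m - 1) := by
        refine Finset.sum_congr rfl fun j _ => count_one j R
    _ = m * (R.card * (Fintype.card V) ^ (m - 1)) := by
        rw [Finset.sum_const, Finset.card_univ, Fintype.card_fin, smul_eq_mul]

lemma sum_X2 (R : Finset V) :
    ∑ y : Fin m → V, ((univ.filter (fun j => y j ∈ R)).card) ^ 2
      = m * (R.card * (Fintype.card V) ^ (m - 1))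
        + m * (m - 1) * (R.card ^ 2 * (Fintype.card V) ^ (m - 2)) := by
  have key : ∀ y : Fin m → V, ((univ.filter (fun j => y j ∈ R)).card) ^ 2
      = ∑ j : Fin m, ∑ j' : Fin m, (if y j ∈ R ∧ y j' ∈ R then 1 else 0) := by
    intro y
    rw [sq, Finset.card_filter, Finset.sum_mul_sum]
    exact Finset.sum_congr rfl fun j _ => Finset.sum_congr rfl fun j' _ => ite_mul_ite' _ _
  calc ∑ y : Fin m → V, ((univ.filter (fun j => y j ∈ R)).card) ^ 2
      = ∑ y : Fin m → V, ∑ j : Fin m, ∑ j' : Fin m, (if y j ∈ R ∧ y j' ∈ R then 1 else 0) :=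
        Finset.sum_congr rfl fun y _ => key y
    _ = ∑ j : Fin m, ∑ y : Fin m → V, ∑ j' : Fin m, (if y j ∈ R ∧ y j' ∈ R then 1 else 0) :=
        Finset.sum_comm
    _ = ∑ j : Fin m, ∑ j' : Fin m, ∑ y : Fin m → V, (if y j ∈ R ∧ y j' ∈ R then 1 else 0) :=
        Finset.sum_congr rfl fun j _ => Finset.sum_comm
    _ = ∑ j : Fin m, ∑ j' : Fin m,
          ((univ.filter (fun y : Fin m → V => y j ∈ R ∧ y j' ∈ R)).card) := by
        refine Finset.sum_congr rfl fun j _ => Finset.sum_congr rfl fun j' _ => ?_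
        rw [Finset.card_filter]
    _ = ∑ j : Fin m, (R.card * (Fintype.card V) ^ (m - 1)
          + (m - 1) * (R.card ^ 2 * (Fintype.card V) ^ (m - 2))) := by
        refine Finset.sum_congr rfl fun j _ => ?_
        rw [← Finset.add_sum_erase _ _ (mem_univ j)]
        congr 1
        · have : (univ.filter (fun y : Fin m → V => y j ∈ R ∧ y j ∈ R))
              = univ.filter (fun y => y j ∈ R) := by
            apply filter_congr; intro y _; simp
          rw [this, count_one]
        · rw [Finset.sum_congr rfl (fun j' hj' =>
            count_two j j' (Finset.ne_of_mem_erase hj').symm R), Finset.sum_const,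
            Finset.card_erase_of_mem (mem_univ j), smul_eq_mul]
          simp
    _ = m * (R.card * (Fintype.card V) ^ (m - 1))
          + m * (m - 1) * (R.card ^ 2 * (Fintype.card V) ^ (m - 2)) := by
        rw [Finset.sum_const, Finset.card_univ, Fintype.card_fin, smul_eq_mul]
        ring

end Moments

section Cheb
variable {V : Type*} [Fintype V] [DecidableEq V]

set_option maxHeartbeats 1000000 in
lemma cheb {m : ℕ} (R : Finset V) (ε : ℝ) (k : ℕ) (hε : 0 < ε) (hm : 2 ≤ m)
    (h8 : 8 ≤ ε * m) (hk : (k:ℝ) < ε * m / 2 + 1)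
    (hn : 0 < Fintype.card V) (hc : ε * (Fintype.card V) ≤ R.card) :
    2 * (((univ.filter (fun y : Fin m → V =>
        (univ.filter (fun j => y j ∈ R)).card < k)).card : ℝ))
      ≤ (Fintype.card V : ℝ) ^ m := by
  set n := Fintype.card V with hn_def
  set X : (Fin m → V) → ℕ := fun y => (univ.filter (fun j => y j ∈ R)).card with hX
  set c : ℝ := (R.card : ℝ) with hcc
  set p : ℝ := c / n with hpp
  have hnR : (0:ℝ) < n := by exact_mod_cast hn
  have hp : ε ≤ p := (le_div_iff₀ hnR).2 hc
  have hp0 : 0 < p := lt_of_lt_of_le hε hp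
  have hcpn : c = p * n := by rw [hpp, div_mul_cancel₀ _ hnR.ne']
  have hA : ((n:ℝ)) ^ m = (n:ℝ) ^ (m-1) * n := by
    conv_lhs => rw [show m = (m-1)+1 by omega]
    rw [pow_succ]
  have hB : ((n:ℝ)) ^ (m-1) = (n:ℝ) ^ (m-2) * n := by
    conv_lhs => rw [show m - 1 = (m-2)+1 by omega]
    rw [pow_succ]
  have hm1 : ((m - 1 : ℕ) : ℝ) = (m:ℝ) - 1 := by
    rw [Nat.cast_sub (by omega : 1 ≤ m), Nat.cast_one]
  -- first and second moments
  have SX : ∑ y : Fin m → V, ((X y : ℝ)) = m * (c * (n:ℝ)^(m-1)) := by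
    rw [← Nat.cast_sum]
    rw [sum_X R]
    push_cast
    ring
  have SX2 : ∑ y : Fin m → V, ((X y : ℝ))^2
      = m * (c * (n:ℝ)^(m-1)) + m * ((m:ℝ)-1) * (c^2 * (n:ℝ)^(m-2)) := by
    have h := sum_X2 (m := m) R
    have hcast : ∑ y : Fin m → V, ((X y : ℝ))^2 = ((∑ y : Fin m → V, (X y)^2 : ℕ) : ℝ) := by
      push_cast; rfl
    rw [hcast, h]
    push_cast [hm1]
    ring
  have hcard : (Fintype.card (Fin m → V) : ℝ) = (n:ℝ) ^ m := by
    rw [Fintype.card_fun, Fintype.card_fin]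
    push_cast; rfl
  set q : ℝ := m * p with hq_def
  have hεmq : ε * m ≤ q := by
    calc ε * m ≤ p * m := mul_le_mul_of_nonneg_right hp (by positivity)
    _ = q := by ring
  have hq : 8 ≤ q := le_trans h8 hεmq
  have hq0 : 0 < q := by linarith
  -- variance bound
  have var_le : ∑ y : Fin m → V, ((X y : ℝ) - q)^2 ≤ q * (n:ℝ)^m := by
    have expand : ∑ y : Fin m → V, ((X y : ℝ) - q)^2
        = ∑ y : Fin m → V, ((X y : ℝ))^2 - 2*q*(∑ y : Fin m → V, ((X y : ℝ)))
          + (n:ℝ)^m * q^2 := by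
      rw [← hcard]
      rw [Finset.sum_congr rfl (fun y _ => by ring :
        ∀ y ∈ (univ : Finset (Fin m → V)), ((X y : ℝ) - q)^2
          = ((X y : ℝ))^2 - 2*q*((X y:ℝ)) + q^2)]
      rw [Finset.sum_add_distrib, Finset.sum_sub_distrib, ← Finset.mul_sum,
        Finset.sum_const, Finset.card_univ, nsmul_eq_mul]
    rw [expand, SX, SX2]
    have e1 : c * (n:ℝ)^(m-1) = p * (n:ℝ)^m := by rw [hcpn, hA]; ring
    have e2 : c^2 * (n:ℝ)^(m-2) = p^2 * (n:ℝ)^m := by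
      rw [hcpn, hA, hB]; ring
    rw [e1, e2, hq_def]
    have hnm : (0:ℝ) ≤ (n:ℝ)^m := by positivity
    nlinarith [sq_nonneg p, mul_nonneg (mul_nonneg (le_of_lt hp0) (le_of_lt hp0)) hnm]
  -- bad set bound
  set bad := univ.filter (fun y : Fin m → V => X y < k) with hbad
  have key : (bad.card : ℝ) * (q/2)^2 ≤ q * (n:ℝ)^m := by
    calc (bad.card : ℝ) * (q/2)^2 = ∑ _y ∈ bad, (q/2)^2 := by
          rw [Finset.sum_const, nsmul_eq_mul]
      _ ≤ ∑ y ∈ bad, ((X y : ℝ) - q)^2 := by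
          apply Finset.sum_le_sum
          intro y hy
          have hXy : X y < k := by
            have := (Finset.mem_filter.1 hy).2
            exact this
          have hX1 : ((X y : ℕ) : ℝ) + 1 ≤ (k:ℝ) := by exact_mod_cast hXy
          have hXq : ((X y : ℕ) : ℝ) < q / 2 := by
            have : (k:ℝ) < ε * m / 2 + 1 := hk
            have h2 : ε * m / 2 ≤ q / 2 := by linarith
            linarith
          have hX0 : (0:ℝ) ≤ ((X y : ℕ) : ℝ) := Nat.cast_nonneg _
          nlinarith
      _ ≤ ∑ y : Fin m → V, ((X y : ℝ) - q)^2 := by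
          apply Finset.sum_le_sum_of_subset_of_nonneg (Finset.subset_univ _)
          intro y _ _
          positivity
      _ ≤ q * (n:ℝ)^m := var_le
  have hbad0 : (0:ℝ) ≤ (bad.card : ℝ) := Nat.cast_nonneg _
  have h4 : ((bad.card : ℝ) * q) * q ≤ (4 * (n:ℝ)^m) * q := by
    have e : ((bad.card : ℝ) * q) * q = 4 * ((bad.card : ℝ) * (q/2)^2) := by ring
    rw [e]
    linarith
  have h2 : (bad.card : ℝ) * q ≤ 4 * (n:ℝ)^m := le_of_mul_le_mul_right h4 hq0
  have h8b : 8 * (bad.card : ℝ) ≤ (bad.card : ℝ) * q := by nlinarith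
  linarith
end Cheb

section Swap
variable {V : Type*} [Fintype V] [DecidableEq V] {m : ℕ}

lemma swap_count (x y : Fin m → V) (R : Finset V) (k : ℕ) :
    ((univ.filter (fun σ : Fin m → Bool =>
      (∀ j, (if σ j then y j else x j) ∉ R) ∧
      k ≤ (univ.filter (fun j => (if σ j then x j else y j) ∈ R)).card)).card) * 2^k
      ≤ 2^m := by
  set E := univ.filter (fun σ : Fin m → Bool =>
      (∀ j, (if σ j then y j else x j) ∉ R) ∧
      k ≤ (univ.filter (fun j => (if σ j then x j else y j) ∈ R)).card) with hE
  rcases E.eq_empty_or_nonempty with he | ⟨σ₀, hσ₀⟩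
  · rw [he]; simp
  obtain ⟨-, h1, h2⟩ := Finset.mem_filter.1 hσ₀
  have hboth : ∀ j, ¬(x j ∈ R ∧ y j ∈ R) := by
    rintro j ⟨hx, hy⟩
    have := h1 j
    cases hσ : σ₀ j <;> simp [hσ, hx, hy] at this
  set A := univ.filter (fun j => x j ∈ R ∨ y j ∈ R) with hA
  have hAm : A.card ≤ m := by
    calc A.card ≤ (univ : Finset (Fin m)).card := Finset.card_le_card (Finset.filter_subset _ _)
    _ = m := by simp
  have hdet : ∀ σ ∈ E, ∀ j ∈ A, σ j = (if x j ∈ R then true else false) := by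
    intro σ hσ j hj
    obtain ⟨-, hσ1, -⟩ := Finset.mem_filter.1 hσ
    have hj' : x j ∈ R ∨ y j ∈ R := (Finset.mem_filter.1 hj).2
    have hXj := hσ1 j
    by_cases hx : x j ∈ R
    · simp only [if_pos hx]
      cases hσj : σ j
      · exfalso; rw [hσj] at hXj; simp at hXj; exact hXj hx
      · rfl
    · simp only [if_neg hx]
      have hy : y j ∈ R := hj'.resolve_left hx
      cases hσj : σ j
      · rfl
      · exfalso; rw [hσj] at hXj; simp at hXj; exact hXj hy
  have hYA : ∀ σ ∈ E, univ.filter (fun j => (if σ j then x j else y j) ∈ R) = A := by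
    intro σ hσ
    obtain ⟨-, hσ1, -⟩ := Finset.mem_filter.1 hσ
    ext j
    simp only [Finset.mem_filter, Finset.mem_univ, true_and, hA]
    constructor
    · intro hmem
      cases hσj : σ j
      · rw [hσj] at hmem; simp at hmem; exact Or.inr hmem
      · rw [hσj] at hmem; simp at hmem; exact Or.inl hmem
    · intro hj'
      have hXj := hσ1 j
      cases hσj : σ j
      · rw [hσj] at hXj; simp at hXj ⊢
        exact hj'.resolve_left hXj
      · rw [hσj] at hXj; simp at hXj ⊢
        exact hj'.resolve_right hXj
  have hkA : k ≤ A.card := by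
    have := hYA σ₀ hσ₀
    rw [this] at h2
    exact h2
  have hsub : E ⊆ Fintype.piFinset (fun j =>
      if j ∈ A then ({if x j ∈ R then true else false} : Finset Bool) else univ) := by
    intro σ hσ
    rw [Fintype.mem_piFinset]
    intro j
    by_cases hj : j ∈ A
    · rw [if_pos hj, Finset.mem_singleton]
      exact hdet σ hσ j hj
    · rw [if_neg hj]; exact mem_univ _
  have hcard : E.card ≤ 2 ^ (m - A.card) := by
    calc E.card ≤ _ := Finset.card_le_card hsub
    _ = ∏ j : Fin m, (if j ∈ A then ({if x j ∈ R then true else false} : Finset Bool)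
          else univ).card := Fintype.card_piFinset _
    _ = 2 ^ (m - A.card) := by
        rw [← Finset.prod_mul_prod_compl A]
        have e1 : ∏ j ∈ A, (if j ∈ A then ({if x j ∈ R then true else false} : Finset Bool)
            else univ).card = 1 := by
          apply Finset.prod_eq_one
          intro j hj
          rw [if_pos hj, Finset.card_singleton]
        have e2 : ∏ j ∈ Aᶜ, (if j ∈ A then ({if x j ∈ R then true else false} : Finset Bool)
            else univ).card = 2 ^ (m - A.card) := by
          rw [Finset.prod_congr rfl (fun j hj => by
            rw [if_neg (Finset.mem_compl.1 hj)] :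
            ∀ j ∈ Aᶜ, (if j ∈ A then ({if x j ∈ R then true else false} : Finset Bool)
              else univ).card = (univ : Finset Bool).card), Finset.prod_const]
          simp [Finset.card_compl]
        rw [e1, e2, one_mul]
  calc E.card * 2^k ≤ 2 ^ (m - A.card) * 2^k := Nat.mul_le_mul_right _ hcard
    _ = 2 ^ (m - A.card + k) := (pow_add 2 _ _).symm
    _ ≤ 2 ^ m := Nat.pow_le_pow_right (by norm_num) (by omega)

def swapP (σ : Fin m → Bool) (p : (Fin m → V) × (Fin m → V)) : (Fin m → V) × (Fin m → V) :=
  (fun j => if σ j then p.2 j else p.1 j, fun j => if σ j then p.1 j else p.2 j)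

omit [Fintype V] [DecidableEq V] in
lemma swapP_involutive (σ : Fin m → Bool) : Function.Involutive (swapP (V := V) σ) := by
  intro p
  unfold swapP
  ext j <;> by_cases h : σ j <;> simp [h]

omit [DecidableEq V] in
lemma sum_swapP (σ : Fin m → Bool) (f : (Fin m → V) × (Fin m → V) → ℕ) :
    ∑ p : (Fin m → V) × (Fin m → V), f (swapP σ p) = ∑ p, f p :=
  Equiv.sum_comp ((swapP_involutive (V := V) σ).toPerm _) f

end Swap

section Net

set_option maxHeartbeats 1000000 in
lemma exists_net {V : Type*} [Fintype V] [DecidableEq V] [Nonempty V]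
    (N : V → Finset V) (ε : ℝ) (m Φ : ℕ) (hε : 0 < ε) (hm : 2 ≤ m) (h8 : 8 ≤ ε * m)
    (hsize : ∀ v, ε * (Fintype.card V) ≤ (N v).card)
    (htrace : ∀ W : Finset V, W.card ≤ 2 * m →
      ((univ : Finset V).image (fun v => W ∩ N v)).card ≤ Φ)
    (hΦ : 2 * Φ < 2 ^ (⌈ε * m / 2⌉₊)) :
    ∃ D : Finset V, D.card ≤ m ∧ ∀ v : V, ∃ u ∈ D, u ∈ N v := by
  classical
  set n := Fintype.card V with hn_def
  have hn : 0 < n := Fintype.card_pos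
  set k := ⌈ε * m / 2⌉₊ with hk_def
  set E1 := univ.filter (fun p : (Fin m → V) × (Fin m → V) =>
    ∃ v, (∀ j, p.1 j ∉ N v) ∧ k ≤ (univ.filter (fun j => p.2 j ∈ N v)).card) with hE1
  set F0 := univ.filter (fun x : Fin m → V => ∃ v, ∀ j, x j ∉ N v) with hF0
  have hcardfun : Fintype.card (Fin m → V) = n ^ m := by
    rw [Fintype.card_fun, Fintype.card_fin]
  -- witness function
  set wit : (Fin m → V) → V := fun x =>
    if h : ∃ v, ∀ j, x j ∉ N v then h.choose else Classical.arbitrary V with hwit_def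
  have hwit_spec : ∀ x ∈ F0, ∀ j, x j ∉ N (wit x) := by
    intro x hx
    have h := (Finset.mem_filter.1 hx).2
    simp only [hwit_def, dif_pos h]
    exact h.choose_spec
  set good : (Fin m → V) → Finset (Fin m → V) := fun x =>
    univ.filter (fun y => k ≤ (univ.filter (fun j => y j ∈ N (wit x))).card) with hgood
  -- Chebyshev: half of the samples are good
  have hgood_half : ∀ x : Fin m → V, n ^ m ≤ 2 * (good x).card := by
    intro x
    have hkR : (k : ℝ) < ε * m / 2 + 1 := by
      rw [hk_def]
      exact Nat.ceil_lt_add_one (by positivity)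
    have hbadR := cheb (m := m) (N (wit x)) ε k hε hm h8 hkR hn (hsize (wit x))
    have hbadN : 2 * ((univ.filter (fun y : Fin m → V =>
        (univ.filter (fun j => y j ∈ N (wit x))).card < k)).card) ≤ n ^ m := by
      exact_mod_cast hbadR
    have hsplit : (good x).card + ((univ.filter (fun y : Fin m → V =>
        (univ.filter (fun j => y j ∈ N (wit x))).card < k)).card) = n ^ m := by
      have e : good x = univ.filter (fun y : Fin m → V =>
          ¬((univ.filter (fun j => y j ∈ N (wit x))).card < k)) := by
        simp only [hgood]
        apply filter_congr
        intro y _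
        simp [not_lt]
      rw [e, add_comm, Finset.card_filter_add_card_filter_not, Finset.card_univ,
        hcardfun]
    linarith
  -- Step I : F0.card * n^m ≤ 2 * E1.card
  have step1 : F0.card * n ^ m ≤ 2 * E1.card := by
    set P := F0.biUnion (fun x => (good x).image (fun y => (x, y))) with hP
    have hPsub : P ⊆ E1 := by
      intro p hp
      obtain ⟨x, hx, hp2⟩ := Finset.mem_biUnion.1 hp
      obtain ⟨y, hy, rfl⟩ := Finset.mem_image.1 hp2
      refine Finset.mem_filter.2 ⟨mem_univ _, ⟨wit x, fun j => hwit_spec x hx j, ?_⟩⟩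
      exact (Finset.mem_filter.1 hy).2
    have hPcard : P.card = ∑ x ∈ F0, (good x).card := by
      rw [Finset.card_biUnion]
      · refine Finset.sum_congr rfl fun x _ => ?_
        apply Finset.card_image_of_injective
        intro a b hab
        exact (Prod.ext_iff.1 hab).2
      · intro x hx x' hx' hne
        simp only [Finset.disjoint_left]
        intro a ha ha'
        obtain ⟨y, _, rfl⟩ := Finset.mem_image.1 ha
        obtain ⟨y', _, he⟩ := Finset.mem_image.1 ha'
        exact hne ((Prod.ext_iff.1 he).1.symm)
    calc F0.card * n ^ m = ∑ _x ∈ F0, n ^ m := by rw [Finset.sum_const, smul_eq_mul]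
      _ ≤ ∑ x ∈ F0, 2 * (good x).card := Finset.sum_le_sum fun x _ => hgood_half x
      _ = 2 * P.card := by rw [hPcard, Finset.mul_sum]
      _ ≤ 2 * E1.card := Nat.mul_le_mul_left _ (Finset.card_le_card hPsub)
  -- Step II : E1.card * 2^k ≤ Φ * (n^m * n^m)
  have hswap_fixed : ∀ p : (Fin m → V) × (Fin m → V),
      (∑ σ : Fin m → Bool, (if swapP σ p ∈ E1 then 1 else 0)) * 2 ^ k ≤ Φ * 2 ^ m := by
    intro p
    set W := (univ.image p.1) ∪ (univ.image p.2) with hW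
    have hWcard : W.card ≤ 2 * m := by
      calc W.card ≤ (univ.image p.1).card + (univ.image p.2).card := Finset.card_union_le _ _
        _ ≤ m + m := add_le_add
            (le_trans Finset.card_image_le (by simp))
            (le_trans Finset.card_image_le (by simp))
        _ = 2 * m := by ring
    set T := (univ : Finset V).image (fun v => W ∩ N v) with hT
    have hTcard : T.card ≤ Φ := htrace W hWcard
    have hmemW1 : ∀ (σ : Fin m → Bool) (j : Fin m), (swapP σ p).1 j ∈ W := by
      intro σ j
      rw [hW]
      by_cases h : σ j
      · have e : (swapP σ p).1 j = p.2 j := by simp [swapP, h]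
        rw [e]
        exact Finset.mem_union_right _ (Finset.mem_image_of_mem _ (mem_univ j))
      · have e : (swapP σ p).1 j = p.1 j := by simp [swapP, h]
        rw [e]
        exact Finset.mem_union_left _ (Finset.mem_image_of_mem _ (mem_univ j))
    have hmemW2 : ∀ (σ : Fin m → Bool) (j : Fin m), (swapP σ p).2 j ∈ W := by
      intro σ j
      rw [hW]
      by_cases h : σ j
      · have e : (swapP σ p).2 j = p.1 j := by simp [swapP, h]
        rw [e]
        exact Finset.mem_union_left _ (Finset.mem_image_of_mem _ (mem_univ j))
      · have e : (swapP σ p).2 j = p.2 j := by simp [swapP, h]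
        rw [e]
        exact Finset.mem_union_right _ (Finset.mem_image_of_mem _ (mem_univ j))
    have hptw : ∀ σ : Fin m → Bool, (if swapP σ p ∈ E1 then 1 else 0)
        ≤ ∑ R ∈ T, (if ((∀ j, (swapP σ p).1 j ∉ R) ∧
            k ≤ (univ.filter (fun j => (swapP σ p).2 j ∈ R)).card) then 1 else 0) := by
      intro σ
      by_cases hmem : swapP σ p ∈ E1
      · rw [if_pos hmem]
        obtain ⟨v, hv1, hv2⟩ := (Finset.mem_filter.1 hmem).2
        have hR : W ∩ N v ∈ T := Finset.mem_image_of_mem _ (mem_univ v)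
        have hEvent : (∀ j, (swapP σ p).1 j ∉ W ∩ N v) ∧
            k ≤ (univ.filter (fun j => (swapP σ p).2 j ∈ W ∩ N v)).card := by
          constructor
          · intro j hin
            exact hv1 j (Finset.mem_inter.1 hin).2
          · have e : univ.filter (fun j => (swapP σ p).2 j ∈ W ∩ N v)
                = univ.filter (fun j => (swapP σ p).2 j ∈ N v) := by
              apply filter_congr
              intro j _
              simp only [Finset.mem_inter]
              exact ⟨fun h => by simpa using h.2, fun h => by simp [hmemW2 σ j, h]⟩
            rw [e]
            exact hv2
        calc (1:ℕ) = (if ((∀ j, (swapP σ p).1 j ∉ W ∩ N v) ∧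
              k ≤ (univ.filter (fun j => (swapP σ p).2 j ∈ W ∩ N v)).card) then 1 else 0) :=
              (if_pos hEvent).symm
          _ ≤ _ := Finset.single_le_sum
              (f := fun R => if ((∀ j, (swapP σ p).1 j ∉ R) ∧
                k ≤ (univ.filter (fun j => (swapP σ p).2 j ∈ R)).card) then 1 else 0)
              (fun R _ => Nat.zero_le _) hR
      · rw [if_neg hmem]
        exact Nat.zero_le _
    have hperR : ∀ R : Finset V,
        (∑ σ : Fin m → Bool, (if ((∀ j, (swapP σ p).1 j ∉ R) ∧
          k ≤ (univ.filter (fun j => (swapP σ p).2 j ∈ R)).card) then 1 else 0)) * 2 ^ k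
          ≤ 2 ^ m := by
      intro R
      have e : ∑ σ : Fin m → Bool, (if ((∀ j, (swapP σ p).1 j ∉ R) ∧
          k ≤ (univ.filter (fun j => (swapP σ p).2 j ∈ R)).card) then 1 else 0)
          = ((univ.filter (fun σ : Fin m → Bool =>
            (∀ j, (if σ j then p.2 j else p.1 j) ∉ R) ∧
            k ≤ (univ.filter (fun j => (if σ j then p.1 j else p.2 j) ∈ R)).card)).card) := by
        rw [Finset.card_filter]
        rfl
      rw [e]
      exact swap_count p.1 p.2 R k
    calc (∑ σ : Fin m → Bool, (if swapP σ p ∈ E1 then 1 else 0)) * 2 ^ k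
        ≤ (∑ σ : Fin m → Bool, ∑ R ∈ T, (if ((∀ j, (swapP σ p).1 j ∉ R) ∧
            k ≤ (univ.filter (fun j => (swapP σ p).2 j ∈ R)).card) then 1 else 0)) * 2 ^ k :=
          Nat.mul_le_mul_right _ (Finset.sum_le_sum fun σ _ => hptw σ)
      _ = ∑ R ∈ T, (∑ σ : Fin m → Bool, (if ((∀ j, (swapP σ p).1 j ∉ R) ∧
            k ≤ (univ.filter (fun j => (swapP σ p).2 j ∈ R)).card) then 1 else 0)) * 2 ^ k := by
          rw [Finset.sum_comm, Finset.sum_mul]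
      _ ≤ ∑ _R ∈ T, 2 ^ m := Finset.sum_le_sum fun R _ => hperR R
      _ = T.card * 2 ^ m := by rw [Finset.sum_const, smul_eq_mul]
      _ ≤ Φ * 2 ^ m := Nat.mul_le_mul_right _ hTcard
  have hsum1 : ∑ σ : Fin m → Bool, ∑ p : (Fin m → V) × (Fin m → V),
      (if swapP σ p ∈ E1 then 1 else 0) = 2 ^ m * E1.card := by
    have hone : ∀ σ : Fin m → Bool, ∑ p : (Fin m → V) × (Fin m → V),
        (if swapP σ p ∈ E1 then 1 else 0) = E1.card := by
      intro σ
      rw [sum_swapP σ (fun p => if p ∈ E1 then 1 else 0)]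
      rw [← Finset.card_filter]
      congr 1
      simp [Finset.filter_mem_eq_inter]
    rw [Finset.sum_congr rfl (fun σ _ => hone σ), Finset.sum_const, smul_eq_mul,
      Finset.card_univ]
    congr 1
    rw [Fintype.card_fun, Fintype.card_fin, Fintype.card_bool]
  have step2 : E1.card * 2 ^ k ≤ Φ * (n ^ m * n ^ m) := by
    have h1 : (2 ^ m * E1.card) * 2 ^ k ≤ (n ^ m * n ^ m) * (Φ * 2 ^ m) := by
      rw [← hsum1]
      calc (∑ σ : Fin m → Bool, ∑ p : (Fin m → V) × (Fin m → V),
            (if swapP σ p ∈ E1 then 1 else 0)) * 2 ^ k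
          = ∑ p : (Fin m → V) × (Fin m → V), (∑ σ : Fin m → Bool,
            (if swapP σ p ∈ E1 then 1 else 0)) * 2 ^ k := by
            rw [Finset.sum_comm, Finset.sum_mul]
        _ ≤ ∑ _p : (Fin m → V) × (Fin m → V), Φ * 2 ^ m :=
            Finset.sum_le_sum fun pp _ => hswap_fixed pp
        _ = (n ^ m * n ^ m) * (Φ * 2 ^ m) := by
            rw [Finset.sum_const, smul_eq_mul, Finset.card_univ, Fintype.card_prod, hcardfun]
    have h2 : 2 ^ m * (E1.card * 2 ^ k) ≤ 2 ^ m * (Φ * (n ^ m * n ^ m)) := by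
      calc 2 ^ m * (E1.card * 2 ^ k) = (2 ^ m * E1.card) * 2 ^ k := by ring
        _ ≤ (n ^ m * n ^ m) * (Φ * 2 ^ m) := h1
        _ = 2 ^ m * (Φ * (n ^ m * n ^ m)) := by ring
    exact Nat.le_of_mul_le_mul_left h2 (pow_pos (by norm_num) m)
  -- conclude : F0 ≠ univ
  have hF0ne : F0 ≠ univ := by
    intro hFu
    have hF0card : F0.card = n ^ m := by rw [hFu, Finset.card_univ, hcardfun]
    have hchain : (n ^ m * n ^ m) * 2 ^ k ≤ 2 * Φ * (n ^ m * n ^ m) := by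
      calc (n ^ m * n ^ m) * 2 ^ k = (F0.card * n ^ m) * 2 ^ k := by rw [hF0card]
        _ ≤ (2 * E1.card) * 2 ^ k := Nat.mul_le_mul_right _ step1
        _ = 2 * (E1.card * 2 ^ k) := by ring
        _ ≤ 2 * (Φ * (n ^ m * n ^ m)) := Nat.mul_le_mul_left _ step2
        _ = 2 * Φ * (n ^ m * n ^ m) := by ring
    have hpos : 0 < n ^ m * n ^ m := by positivity
    have hlt : 2 * Φ * (n ^ m * n ^ m) < 2 ^ k * (n ^ m * n ^ m) :=
      (Nat.mul_lt_mul_right hpos).2 hΦ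
    have : (n ^ m * n ^ m) * 2 ^ k < 2 ^ k * (n ^ m * n ^ m) := lt_of_le_of_lt hchain hlt
    rw [mul_comm] at this
    exact lt_irrefl _ this
  obtain ⟨x, hx⟩ : ∃ x : Fin m → V, x ∉ F0 := by
    by_contra hcon
    push_neg at hcon
    exact hF0ne (Finset.eq_univ_iff_forall.2 hcon)
  have hx' : ∀ v : V, ∃ j, x j ∈ N v := by
    have : ¬(∃ v, ∀ j, x j ∉ N v) := by
      intro hc
      exact hx (Finset.mem_filter.2 ⟨mem_univ _, hc⟩)
    push_neg at this
    exact this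
  refine ⟨univ.image x, ?_, ?_⟩
  · calc (univ.image x).card ≤ (univ : Finset (Fin m)).card := Finset.card_image_le
      _ = m := by simp
  · intro v
    obtain ⟨j, hj⟩ := hx' v
    exact ⟨x j, Finset.mem_image_of_mem x (mem_univ j), hj⟩

end Net

lemma sum_choose_le (N d : ℕ) : ∑ i ∈ Finset.range (d+1), N.choose i ≤ (N+1)^d := by
  induction d with
  | zero => simp
  | succ d ih =>
    rw [Finset.sum_range_succ]
    calc (∑ i ∈ Finset.range (d+1), N.choose i) + N.choose (d+1)
        ≤ (N+1)^d + N^(d+1) := add_le_add ih (Nat.choose_le_pow _ _)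
      _ ≤ (N+1)^d + N * (N+1)^d := by
          have : N^(d+1) ≤ N * (N+1)^d := by
            rw [pow_succ']
            exact Nat.mul_le_mul_left _ (Nat.pow_le_pow_left (by omega) _)
          omega
      _ = (N+1)^(d+1) := by ring

/-- The graph `G` has VC dimension at most `d`: every set of vertices shattered by
the family of neighbourhoods `{N(v) : v ∈ V(G)}` has size at most `d`. -/
def VCDimLE {V : Type*} (G : SimpleGraph V) (d : ℕ) : Prop :=
  ∀ S : Finset V, (∀ T ⊆ S, ∃ v : V, ∀ s ∈ S, G.Adj v s ↔ s ∈ T) → S.card ≤ d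

lemma trace_bound {V : Type*} [Fintype V] [DecidableEq V] (G : SimpleGraph V)
    [DecidableRel G.Adj] (d : ℕ) (hvc : VCDimLE G d) (W : Finset V) :
    ((univ : Finset V).image (fun v => W ∩ G.neighborFinset v)).card
      ≤ ∑ i ∈ Finset.range (d+1), (W.card).choose i := by
  set 𝒜 := (univ : Finset V).image (fun v => W ∩ G.neighborFinset v) with h𝒜
  have h1 : 𝒜.card ≤ 𝒜.shatterer.card := Finset.card_le_card_shatterer 𝒜
  have h2 : 𝒜.shatterer ⊆ (W.powerset.filter (fun s => s.card ≤ d)) := by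
    intro s hs
    have hsh : 𝒜.Shatters s := Finset.mem_shatterer.1 hs
    have hsW : s ⊆ W := by
      obtain ⟨u, hu, hsu⟩ := hsh.exists_superset
      obtain ⟨v, -, rfl⟩ := Finset.mem_image.1 hu
      exact hsu.trans Finset.inter_subset_left
    have hsd : s.card ≤ d := by
      apply hvc
      intro T hT
      obtain ⟨u, hu, hst⟩ := hsh hT
      obtain ⟨v, -, rfl⟩ := Finset.mem_image.1 hu
      refine ⟨v, fun a ha => ?_⟩
      constructor
      · intro hadj
        have hmem : a ∈ s ∩ (W ∩ G.neighborFinset v) :=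
          Finset.mem_inter.2 ⟨ha, Finset.mem_inter.2
            ⟨hsW ha, (SimpleGraph.mem_neighborFinset G v a).2 hadj⟩⟩
        rw [hst] at hmem
        exact hmem
      · intro haT
        have hmem : a ∈ s ∩ (W ∩ G.neighborFinset v) := hst ▸ haT
        exact (SimpleGraph.mem_neighborFinset G v a).1
          (Finset.mem_inter.1 (Finset.mem_inter.1 hmem).2).2
    exact Finset.mem_filter.2 ⟨Finset.mem_powerset.2 hsW, hsd⟩
  have h3 : (W.powerset.filter (fun s => s.card ≤ d)).card
      ≤ ∑ i ∈ Finset.range (d+1), (W.card).choose i := by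
    have hsubset : W.powerset.filter (fun s => s.card ≤ d)
        ⊆ (Finset.range (d+1)).biUnion (fun i => W.powersetCard i) := by
      intro s hs
      obtain ⟨hpow, hcard⟩ := Finset.mem_filter.1 hs
      exact Finset.mem_biUnion.2 ⟨s.card, Finset.mem_range.2 (by omega),
        Finset.mem_powersetCard.2 ⟨Finset.mem_powerset.1 hpow, rfl⟩⟩
    calc (W.powerset.filter (fun s => s.card ≤ d)).card
        ≤ ((Finset.range (d+1)).biUnion (fun i => W.powersetCard i)).card :=
          Finset.card_le_card hsubset
      _ ≤ ∑ i ∈ Finset.range (d+1), (W.powersetCard i).card := Finset.card_biUnion_le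
      _ = ∑ i ∈ Finset.range (d+1), (W.card).choose i := by
          refine Finset.sum_congr rfl fun i _ => ?_
          rw [Finset.card_powersetCard]
  exact le_trans h1 (le_trans (Finset.card_le_card h2) h3)

/-- `D` is a dominating set of `G`. -/
def IsDomSet {V : Type*} (G : SimpleGraph V) (D : Finset V) : Prop :=
  ∀ v : V, v ∈ D ∨ ∃ u ∈ D, G.Adj u v

/-- The domination number of `G`. -/
noncomputable def domNum {V : Type*} [Fintype V] (G : SimpleGraph V) : ℕ :=
  sInf {k | ∃ D : Finset V, D.card = k ∧ IsDomSet G D}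

set_option maxHeartbeats 4000000 in
theorem stmt_6 {V : Type*} [Fintype V] [Nonempty V] (G : SimpleGraph V)
    [DecidableRel G.Adj] (d : ℕ) (δ : ℝ) (hδ : 0 < δ)
    (hvc : VCDimLE G d)
    (hdeg : ∀ v : V, δ * Fintype.card V ≤ G.degree v) :
    (domNum G : ℝ) ≤ (8 * d / δ) * Real.logb 2 (8 * d / δ) := by
  classical
  set n := Fintype.card V with hn_def
  have hn : 0 < n := Fintype.card_pos
  have hnR : (0:ℝ) < n := by exact_mod_cast hn
  obtain ⟨v₀⟩ := ‹Nonempty V›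
  have hdeg0 : 0 < G.degree v₀ := by
    have h1 := hdeg v₀
    have h2 : (0:ℝ) < G.degree v₀ := lt_of_lt_of_le (by positivity) h1
    exact_mod_cast h2
  obtain ⟨u₀, hu₀⟩ : ∃ u, G.Adj v₀ u := (G.degree_pos_iff_exists_adj v₀).1 hdeg0
  have hd1 : 1 ≤ d := by
    have h := hvc {v₀} ?_
    · simpa using h
    · intro T hT
      by_cases hv : v₀ ∈ T
      · refine ⟨u₀, fun s hs => ?_⟩
        simp only [Finset.mem_singleton] at hs
        subst hs
        simp [hv, hu₀.symm]
      · refine ⟨v₀, fun s hs => ?_⟩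
        simp only [Finset.mem_singleton] at hs
        subst hs
        simp [hv]
  have hdR : (1:ℝ) ≤ d := by exact_mod_cast hd1
  have hδ1 : δ < 1 := by
    have h1 : δ * n ≤ (G.degree v₀ : ℝ) := hdeg v₀
    have h2 : (G.degree v₀ : ℝ) < n := by exact_mod_cast G.degree_lt_card_verts v₀
    nlinarith
  set r : ℝ := 8 * d / δ with hr
  have hr8 : 8 ≤ r := by
    rw [hr, le_div_iff₀ hδ]
    nlinarith
  have hr0 : (0:ℝ) < r := by linarith
  have hL3 : 3 ≤ Real.logb 2 r := by
    have h8 : Real.logb 2 8 = 3 := by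
      rw [show (8:ℝ) = 2^(3:ℕ) by norm_num, Real.logb_pow,
        Real.logb_self_eq_one (by norm_num)]
      norm_num
    calc (3:ℝ) = Real.logb 2 8 := h8.symm
      _ ≤ Real.logb 2 r := Real.logb_le_logb_of_le (by norm_num) (by norm_num) hr8
  set L : ℝ := Real.logb 2 r with hL
  set M : ℝ := r * L with hM
  have hM24 : 24 ≤ M := by nlinarith
  set m := ⌊M⌋₊ with hm_def
  have hmM : (m:ℝ) ≤ M := Nat.floor_le (by linarith)
  have hMm1 : M - 1 ≤ (m:ℝ) := by
    have := Nat.lt_floor_add_one M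
    push_cast
    linarith
  have hδM : δ * M = 8 * d * L := by
    rw [hM, hr]
    field_simp
  have h8dL : 24 ≤ 8 * (d:ℝ) * L := by nlinarith
  have hεm8 : 8 ≤ δ * m := by nlinarith
  have hm2 : 2 ≤ m := by
    have hmR : (2:ℝ) ≤ (m:ℝ) := by linarith
    exact_mod_cast hmR
  set k := ⌈δ * (m:ℝ) / 2⌉₊ with hk
  -- key numeric inequality
  have hkey : 2 * (2*m+1)^d < 2^k := by
    have hkR : δ * m / 2 ≤ (k:ℝ) := Nat.le_ceil _
    have base_pos : (0:ℝ) < 2*(m:ℝ)+1 := by positivity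
    have hlog_m : Real.logb 2 (2*(m:ℝ)+1) ≤ 4 * L - 2 := by
      have hLr : L ≤ (3/2) * r := by
        have hlogr : Real.log r ≤ r - 1 := Real.log_le_sub_one_of_pos hr0
        have hlog2 : (2/3 : ℝ) ≤ Real.log 2 := by
          have := Real.log_two_gt_d9
          linarith
        have hlog2pos : (0:ℝ) < Real.log 2 := by linarith
        rw [hL, Real.logb, div_le_iff₀ hlog2pos]
        nlinarith
      have h4 : 4*(2*(m:ℝ)+1) ≤ r^4 := by
        have hr2 : (64:ℝ) ≤ r^2 := by nlinarith
        have hM32 : M ≤ (3/2) * r^2 := by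
          rw [hM]
          nlinarith
        have : 4*(2*(m:ℝ)+1) ≤ 8*M + 4 := by linarith
        have h12 : 8*M + 4 ≤ 12*r^2 + 4 := by linarith
        have h13 : 12*r^2 + 4 ≤ 13*r^2 := by nlinarith
        have h14 : 13*r^2 ≤ r^4 := by nlinarith
        linarith
      have hmono : Real.logb 2 (4*(2*(m:ℝ)+1)) ≤ Real.logb 2 (r^4) :=
        Real.logb_le_logb_of_le (by norm_num) (by positivity) h4
      have e1 : Real.logb 2 (4*(2*(m:ℝ)+1)) = 2 + Real.logb 2 (2*(m:ℝ)+1) := by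
        rw [Real.logb_mul (by norm_num) (by positivity)]
        congr 1
        rw [show (4:ℝ) = 2^(2:ℕ) by norm_num, Real.logb_pow,
          Real.logb_self_eq_one (by norm_num)]
        norm_num
      have e2 : Real.logb 2 (r^4) = 4 * L := by
        rw [Real.logb_pow, hL]
        norm_num
      rw [e1, e2] at hmono
      linarith
    have hmain : 1 + (d:ℝ) * Real.logb 2 (2*(m:ℝ)+1) < δ*m/2 := by
      have hδm2 : 4*(d:ℝ)*L - 1/2 ≤ δ*m/2 := by nlinarith
      have hbracket : (d:ℝ) * Real.logb 2 (2*(m:ℝ)+1) ≤ 4*(d:ℝ)*L - 2*(d:ℝ) := by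
        nlinarith [hlog_m, hdR]
      nlinarith [hdR]
    have hlhs : (2:ℝ) * (2*(m:ℝ)+1)^d < (2:ℝ)^(k:ℕ) := by
      have e0 : (2*(m:ℝ)+1) = (2:ℝ) ^ (Real.logb 2 (2*(m:ℝ)+1)) :=
        (Real.rpow_logb (by norm_num) (by norm_num) base_pos).symm
      calc (2:ℝ) * (2*(m:ℝ)+1)^d
          = 2 * ((2:ℝ) ^ (Real.logb 2 (2*(m:ℝ)+1)))^d := by rw [← e0]
        _ = (2:ℝ) ^ (1 + (d:ℝ) * Real.logb 2 (2*(m:ℝ)+1)) := by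
            rw [← Real.rpow_natCast ((2:ℝ) ^ (Real.logb 2 (2*(m:ℝ)+1))) d,
              ← Real.rpow_mul (by norm_num), Real.rpow_add (by norm_num), Real.rpow_one]
            ring_nf
        _ < (2:ℝ) ^ (δ*(m:ℝ)/2) := Real.rpow_lt_rpow_of_exponent_lt (by norm_num) hmain
        _ ≤ (2:ℝ) ^ ((k:ℝ)) := Real.rpow_le_rpow_of_exponent_le (by norm_num) hkR
        _ = (2:ℝ)^(k:ℕ) := Real.rpow_natCast 2 k
    have hcast : ((2 * (2*m+1)^d : ℕ) : ℝ) < (((2:ℕ)^k : ℕ) : ℝ) := by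
      push_cast
      convert hlhs using 2 <;> push_cast <;> ring
    exact_mod_cast hcast
  -- apply the epsilon-net lemma
  have htrace : ∀ W : Finset V, W.card ≤ 2 * m →
      ((univ : Finset V).image (fun v => W ∩ G.neighborFinset v)).card ≤ (2*m+1)^d := by
    intro W hW
    calc ((univ : Finset V).image (fun v => W ∩ G.neighborFinset v)).card
        ≤ ∑ i ∈ Finset.range (d+1), (W.card).choose i := trace_bound G d hvc W
      _ ≤ ∑ i ∈ Finset.range (d+1), (2*m).choose i :=
          Finset.sum_le_sum fun i _ => Nat.choose_le_choose i hW
      _ ≤ (2*m+1)^d := sum_choose_le (2*m) d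
  have hsize : ∀ v, δ * (Fintype.card V) ≤ ((G.neighborFinset v).card : ℝ) := by
    intro v
    rw [SimpleGraph.card_neighborFinset_eq_degree]
    exact hdeg v
  obtain ⟨D, hDcard, hDdom⟩ := exists_net (fun v => G.neighborFinset v) δ m ((2*m+1)^d)
    hδ hm2 hεm8 hsize htrace hkey
  have hdom : IsDomSet G D := by
    intro v
    right
    obtain ⟨u, hu, huv⟩ := hDdom v
    exact ⟨u, hu, ((SimpleGraph.mem_neighborFinset G v u).1 huv).symm⟩
  have hnum : domNum G ≤ D.card := Nat.sInf_le ⟨D, rfl, hdom⟩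
  calc (domNum G : ℝ) ≤ (D.card : ℝ) := by exact_mod_cast hnum
    _ ≤ (m : ℝ) := by exact_mod_cast hDcard
    _ ≤ M := hmM
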